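/- Let p ≥ q ≥ 1 be even integers such that p/q is an odd integer, and define φ_{p,q}(x) = x^{p/q}/(1+x^p)^{1/q}. Then for every non-negative integer m of the form m = p/q + p·j with j ∈ ℕ₀, the m-th derivative of φ_{p,q} at 0 satisfies |φ_{p,q}^{(m)}(0)| ≥ 1. -/

import Mathlib

/-- The `(p,q)`-activation `φ_{p,q}(x) = x^{p/q}/(1+x^p)^{1/q}` (for even `p`, so
`x^p ≥ 0`), where `r = p/q`. -/
noncomputable def phipq (p q r : ℕ) (x : ℝ) : ℝ := x ^ r / (1 + x ^ p) ^ ((1 : ℝ) / q)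

open Finset Filter Nat

noncomputable def wcoef (a : ℝ) (k : ℕ) : ℝ := (∏ i ∈ Finset.range k, (a - i)) / (k ! : ℝ)

lemma iteratedDeriv_one_add_rpow (a : ℝ) (k : ℕ) :
    ∀ y : ℝ, -1 < y → iteratedDeriv k (fun y : ℝ => (1 + y) ^ a) y
      = (∏ i ∈ Finset.range k, (a - i)) * (1 + y) ^ (a - k) := by
  induction k with
  | zero => intro y hy; simp
  | succ k ih =>
    intro y hy
    rw [iteratedDeriv_succ]
    have hEq : iteratedDeriv k (fun y : ℝ => (1 + y) ^ a) =ᶠ[nhds y]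
        fun z => (∏ i ∈ Finset.range k, (a - i)) * (1 + z) ^ (a - k) := by
      filter_upwards [isOpen_Ioi.mem_nhds (show y ∈ Set.Ioi (-1 : ℝ) from hy)] with z hz
      exact ih z hz
    rw [hEq.deriv_eq]
    have h0 : (1 : ℝ) + y ≠ 0 := by linarith
    have h1 := ((hasDerivAt_id y).const_add 1).rpow_const (p := a - k) (Or.inl h0)
    simp only [id] at h1
    rw [(h1.const_mul _).deriv, Finset.prod_range_succ]
    have : a - k - 1 = a - (k + 1 : ℕ) := by push_cast; ring
    rw [this]; ring

lemma analyticAt_one_add_rpow (a : ℝ) : AnalyticAt ℝ (fun y : ℝ => (1 + y) ^ a) 0 := by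
  have hc : AnalyticAt ℂ (fun z : ℂ => (1 + z) ^ (a : ℂ)) 0 := by
    refine (analyticAt_const.add analyticAt_id).cpow analyticAt_const ?_
    simp [Complex.mem_slitPlane_iff]
  have hof : AnalyticAt ℝ (fun y : ℝ => (y : ℂ)) 0 := Complex.ofRealCLM.analyticAt 0
  have hg : AnalyticAt ℝ (fun z : ℂ => (1 + z) ^ (a : ℂ)) ((fun y : ℝ => (y : ℂ)) 0) := by
    simpa using hc.restrictScalars
  have h1 := hg.comp hof
  have hre : AnalyticAt ℝ (fun z : ℂ => z.re)
      (((fun z : ℂ => (1 + z) ^ (a : ℂ)) ∘ fun y : ℝ => (y : ℂ)) 0) :=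
    Complex.reCLM.analyticAt _
  have h2 := hre.comp h1
  refine h2.congr ?_
  filter_upwards [isOpen_Ioi.mem_nhds (show (0:ℝ) ∈ Set.Ioi (-1 : ℝ) by norm_num)] with y hy
  have hpos : (0:ℝ) ≤ 1 + y := by simp only [Set.mem_Ioi] at hy; linarith
  have h3 := Complex.ofReal_cpow hpos a
  push_cast at h3
  simp only [Function.comp_apply, ← h3, Complex.ofReal_re]

lemma hasSum_one_add_rpow (a : ℝ) :
    ∀ᶠ y in nhds (0 : ℝ), HasSum (fun k => y ^ k * wcoef a k) ((1 + y) ^ a) := by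
  obtain ⟨ps, hps⟩ := analyticAt_one_add_rpow a
  have hcoeff : ∀ k, ps.coeff k = wcoef a k := by
    intro k
    obtain ⟨R, hball⟩ := hps
    have h1 := hball.factorial_smul (1 : ℝ) k
    rw [← iteratedDeriv_eq_iteratedFDeriv,
      iteratedDeriv_one_add_rpow a k 0 (by norm_num)] at h1
    have h2 : ps k (fun _ => (1:ℝ)) = ps.coeff k := rfl
    rw [h2] at h1
    simp only [add_zero, Real.one_rpow, mul_one, nsmul_eq_mul] at h1
    rw [wcoef, ← h1]
    field_simp
  filter_upwards [hasFPowerSeriesAt_iff.mp hps] with y hy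
  simp only [hcoeff, smul_eq_mul, zero_add] at hy
  exact hy

theorem phipq_iteratedDeriv_zero_ge_one (p q r : ℕ) (hep : Even p) (heq : Even q)
    (hq : 1 ≤ q) (hpq : q ≤ p) (hr : p = q * r) (hodd : Odd r)
    (m j : ℕ) (hm : m = r + p * j) :
    1 ≤ |iteratedDeriv m (phipq p q r) 0| := by
  have hq2 : 2 ≤ q := by obtain ⟨t, ht⟩ := heq; omega
  have hp0 : 0 < p := by omega
  have hr1 : 1 ≤ r := by obtain ⟨s, hs⟩ := hodd; omega
  set a : ℝ := -(1 / (q : ℝ)) with ha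
  set c : ℕ → ℝ := fun n => if r ≤ n ∧ p ∣ n - r then wcoef a ((n - r) / p) else 0 with hc
  have hc2 : ∀ k, c (r + p * k) = wcoef a k := by
    intro k
    have h2 : (r + p * k) - r = p * k := by omega
    simp only [hc, h2]
    rw [if_pos ⟨Nat.le_add_right _ _, dvd_mul_right p k⟩, Nat.mul_div_cancel_left k hp0]
  have hco : ∀ n, (FormalMultilinearSeries.ofScalars ℝ c).coeff n = c n := by
    intro n
    simp [FormalMultilinearSeries.coeff, FormalMultilinearSeries.ofScalars, Pi.one_def,
      List.ofFn_const, List.prod_replicate, one_pow]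
  have hinj : Function.Injective (fun k : ℕ => r + p * k) := by
    intro k1 k2 h
    simp only at h
    exact Nat.eq_of_mul_eq_mul_left hp0 (by omega)
  -- the power series of φ at 0
  have hFP : HasFPowerSeriesAt (phipq p q r) (FormalMultilinearSeries.ofScalars ℝ c) 0 := by
    rw [hasFPowerSeriesAt_iff]
    have hcont : Tendsto (fun z : ℝ => z ^ p) (nhds 0) (nhds 0) := by
      simpa [zero_pow hp0.ne'] using (continuous_pow p).tendsto (0 : ℝ)
    filter_upwards [hcont.eventually (hasSum_one_add_rpow a),
      hcont.eventually (eventually_gt_nhds (show (-1:ℝ) < 0 by norm_num))] with z hz hz1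
    have hpos : (0:ℝ) < 1 + z ^ p := by linarith
    have hsum := hz.mul_left (z ^ r)
    have hval : z ^ r * (1 + z ^ p) ^ a = phipq p q r (0 + z) := by
      rw [zero_add, phipq, ha, Real.rpow_neg hpos.le]
      exact (div_eq_mul_inv _ _).symm
    have hrange : ∀ n ∉ Set.range (fun k : ℕ => r + p * k),
        z ^ n • (FormalMultilinearSeries.ofScalars ℝ c).coeff n = 0 := by
      intro n hn
      have hnot : ¬(r ≤ n ∧ p ∣ n - r) := by
        rintro ⟨h1, k, hk⟩
        exact hn ⟨k, show r + p * k = n by omega⟩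
      simp [hco, hc, hnot]
    refine (hinj.hasSum_iff hrange).mp ?_
    have heq2 : ((fun n => z ^ n • (FormalMultilinearSeries.ofScalars ℝ c).coeff n) ∘
        fun k : ℕ => r + p * k) = fun k => z ^ r * ((z ^ p) ^ k * wcoef a k) := by
      funext k
      simp only [Function.comp_apply, hco, hc2, smul_eq_mul, pow_add, pow_mul]
      ring
    rw [heq2, ← hval]
    exact hsum
  -- extract the m-th derivative
  obtain ⟨R, hball⟩ := hFP
  have h1 := hball.factorial_smul (1 : ℝ) m
  rw [← iteratedDeriv_eq_iteratedFDeriv] at h1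
  have h2 : (FormalMultilinearSeries.ofScalars ℝ c) m (fun _ => (1:ℝ)) = c m := hco m
  rw [h2, nsmul_eq_mul] at h1
  rw [← h1, hm, hc2 j, ← hm]
  -- the numeric bound
  have hq0 : (0:ℝ) < q := by positivity
  have habs : |∏ i ∈ Finset.range j, (a - (i:ℝ))| = ∏ i ∈ Finset.range j, (1/(q:ℝ) + i) := by
    rw [Finset.abs_prod]
    refine Finset.prod_congr rfl fun i _ => ?_
    have h3 : a - (i:ℝ) = -(1/(q:ℝ) + i) := by rw [ha]; ring
    rw [h3, abs_neg, abs_of_pos (by positivity)]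
  match j, hm with
  | 0, hm =>
    simp only [wcoef, Nat.factorial_zero, Finset.range_zero, Finset.prod_empty, Nat.cast_one,
      div_one, mul_one, Nat.abs_cast]
    exact_mod_cast Nat.one_le_iff_ne_zero.mpr m.factorial_ne_zero
  | k + 1, hm =>
    have hA : q * (k + 1) ≤ m ! :=
      le_trans (le_trans (Nat.mul_le_mul_right _ hpq) (by omega)) (Nat.self_le_factorial m)
    have hprod : (k ! : ℝ) * (1/(q:ℝ)) ≤ ∏ i ∈ Finset.range (k+1), (1/(q:ℝ) + i) := by
      rw [Finset.prod_range_succ']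
      have hb : (∏ i ∈ Finset.range k, ((i:ℝ) + 1)) ≤
          ∏ i ∈ Finset.range k, (1/(q:ℝ) + ((i:ℕ)+1:ℕ)) := by
        refine Finset.prod_le_prod (fun i _ => by positivity) fun i _ => ?_
        push_cast
        have : (0:ℝ) < 1/(q:ℝ) := by positivity
        linarith
      have hfac : (∏ i ∈ Finset.range k, ((i:ℝ) + 1)) = (k ! : ℝ) := by
        rw [← Finset.prod_range_add_one_eq_factorial k]
        push_cast
        rfl
      push_cast
      simp only [Nat.cast_zero, add_zero]
      calc (k ! : ℝ) * (1/(q:ℝ)) ≤ (∏ i ∈ Finset.range k, (1/(q:ℝ) + ((i:ℝ)+1))) * (1/(q:ℝ)) := by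
            apply mul_le_mul_of_nonneg_right _ (by positivity)
            rw [← hfac]
            refine hb.trans_eq (Finset.prod_congr rfl fun i _ => ?_)
            push_cast
            ring
        _ = _ := by norm_num
    have e2 : (1:ℝ) ≤ (m ! : ℝ) / ((q:ℝ) * (k+1)) := by
      rw [one_le_div (by positivity)]
      exact_mod_cast hA
    have e1 : (m ! : ℝ) * (((k ! : ℝ) * (1/(q:ℝ))) / ((k+1)! : ℝ)) =
        (m ! : ℝ) / ((q:ℝ) * (k+1)) := by
      rw [Nat.factorial_succ]
      push_cast
      field_simp
    calc (1:ℝ) ≤ (m ! : ℝ) / ((q:ℝ) * (k+1)) := e2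
      _ = (m ! : ℝ) * (((k ! : ℝ) * (1/(q:ℝ))) / ((k+1)! : ℝ)) := e1.symm
      _ ≤ (m ! : ℝ) * ((∏ i ∈ Finset.range (k+1), (1/(q:ℝ) + i)) / ((k+1)! : ℝ)) := by
          have hfp : (0:ℝ) < ((k+1)! : ℝ) := by exact_mod_cast (k+1).factorial_pos
          apply mul_le_mul_of_nonneg_left _ (by positivity)
          exact div_le_div_of_nonneg_right hprod hfp.le
      _ = |(m ! : ℝ) * wcoef a (k+1)| := by
          rw [abs_mul, Nat.abs_cast, wcoef, abs_div, habs, Nat.abs_cast]
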